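/- Let n ≥ 2, p, q ∈ (0,1), let the prior on Θ_n be uniform, fix θ ∈ Θ_n, let γ ∈ (0,1), and let D : 𝒳_n → 𝒫(Θ_n) be any map with Π(D(x) | X^n = x) ≥ 1 − γ for all x ∈ 𝒳_n (a credible set of credible level 1 − γ). Then D(X^n) is a confidence set of confidence level: P_θ(θ ∈ D(X^n)) ≥ 1 − (n/(2(1 − γ)))·ρ(p,q)^{n/2}·exp(n·ρ(p,q)^{n/2}). -/

import Mathlib

open Finset Real Filter

/-- The set of potential edges of an `n`-vertex graph: pairs `(i,j)` with `i < j`. -/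
abbrev Edge (n : ℕ) := {e : Fin n × Fin n // e.1 < e.2}

/-- An observed graph: an edge indicator for each potential edge. -/
abbrev ObsGraph (n : ℕ) := Edge n → Bool

/-- Edge probability under assignment `θ`: `p` within communities, `q` between. -/
noncomputable def edgeProb {n : ℕ} (p q : ℝ) (θ : Fin n → Bool) (e : Edge n) : ℝ :=
  if θ e.val.1 = θ e.val.2 then p else q

/-- Probability mass function of the observed graph under `θ`. -/
noncomputable def graphPMF {n : ℕ} (p q : ℝ) (θ : Fin n → Bool) (x : ObsGraph n) : ℝ :=
  ∏ e : Edge n, if x e then edgeProb p q θ e else 1 - edgeProb p q θ e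

/-- Hellinger affinity of Bernoulli parameters. -/
noncomputable def rho (p q : ℝ) : ℝ := Real.sqrt (p * q) + Real.sqrt ((1 - p) * (1 - q))

/-- Hamming distance. -/
def hdist {n : ℕ} (θ η : Fin n → Bool) : ℕ := (Finset.univ.filter fun i => θ i ≠ η i).card

/-- The metric `k(θ,η) = h(θ,η) ∧ (n - h(θ,η))`. -/
def kdist {n : ℕ} (θ η : Fin n → Bool) : ℕ := min (hdist θ η) (n - hdist θ η)

/-- Edges whose probability changes from `p` to `q` when replacing `θ` by `η`. -/
def D1 {n : ℕ} (θ η : Fin n → Bool) : Finset (Fin n × Fin n) :=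
  Finset.univ.filter fun e => e.1 < e.2 ∧ θ e.1 = θ e.2 ∧ η e.1 ≠ η e.2

/-- Edges whose probability changes from `q` to `p` when replacing `θ` by `η`. -/
def D2 {n : ℕ} (θ η : Fin n → Bool) : Finset (Fin n × Fin n) :=
  Finset.univ.filter fun e => e.1 < e.2 ∧ θ e.1 ≠ θ e.2 ∧ η e.1 = η e.2

/-- Size of the smallest community. -/
def countOnes {n : ℕ} (θ : Fin n → Bool) : ℕ := (Finset.univ.filter fun i => θ i = true).card

/-- The parameter space `Θ_n`. -/
def Theta (n : ℕ) : Finset (Fin n → Bool) :=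
  Finset.univ.filter fun θ => 2 * countOnes θ ≤ n ∧
    ∀ i : Fin n, 2 * countOnes θ = n → (i : ℕ) = 0 → θ i = false

/-- Posterior mass of `A ⊆ Θ_n` given data `x`, under prior mass function `π`. -/
noncomputable def postMass {n : ℕ} (p q : ℝ) (pri : (Fin n → Bool) → ℝ)
    (A : Finset (Fin n → Bool)) (x : ObsGraph n) : ℝ :=
  (∑ η ∈ A, pri η * graphPMF p q η x) / (∑ η ∈ Theta n, pri η * graphPMF p q η x)

/-- `P_θ`-expectation of the posterior mass of `A`. -/
noncomputable def expPostMass {n : ℕ} (p q : ℝ) (pri : (Fin n → Bool) → ℝ)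
    (θ : Fin n → Bool) (A : Finset (Fin n → Bool)) : ℝ :=
  ∑ x : ObsGraph n, graphPMF p q θ x * postMass p q pri A x

/-- The uniform prior on `Θ_n`. -/
noncomputable def unifPrior (n : ℕ) : (Fin n → Bool) → ℝ := fun _ => ((2:ℝ) ^ (n - 1))⁻¹

/-- Hamming ball `B_n(θ,k)` inside `Θ_n`. -/
def hball {n : ℕ} (θ : Fin n → Bool) (k : ℕ) : Finset (Fin n → Bool) :=
  (Theta n).filter fun η => kdist η θ ≤ k

namespace Stmt17Aux

lemma sqrt_le_half_add {a b : ℝ} (ha : 0 ≤ a) (hb : 0 ≤ b) :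
    Real.sqrt (a * b) ≤ (a + b) / 2 := by
  rw [show (a+b)/2 = Real.sqrt (((a+b)/2)^2) from (Real.sqrt_sq (by positivity)).symm]
  apply Real.sqrt_le_sqrt; nlinarith [sq_nonneg (a-b)]

lemma sqrt_prod {ι : Type*} (s : Finset ι) (f : ι → ℝ) (h : ∀ i ∈ s, 0 ≤ f i) :
    Real.sqrt (∏ i ∈ s, f i) = ∏ i ∈ s, Real.sqrt (f i) := by
  induction s using Finset.cons_induction with
  | empty => simp
  | cons a s ha ih =>
    rw [prod_cons, prod_cons, Real.sqrt_mul (h a (mem_cons_self a s)),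
      ih (fun i hi => h i (mem_cons_of_mem hi))]

variable {n : ℕ} {p q : ℝ}

lemma edgeProb_mem (hp : p ∈ Set.Ioo (0:ℝ) 1) (hq : q ∈ Set.Ioo (0:ℝ) 1)
    (θ : Fin n → Bool) (e : Edge n) : edgeProb p q θ e ∈ Set.Ioo (0:ℝ) 1 := by
  unfold edgeProb; split <;> assumption

lemma graphPMF_pos (hp : p ∈ Set.Ioo (0:ℝ) 1) (hq : q ∈ Set.Ioo (0:ℝ) 1)
    (θ : Fin n → Bool) (x : ObsGraph n) : 0 < graphPMF p q θ x := by
  unfold graphPMF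
  apply Finset.prod_pos
  intro e _
  have h := edgeProb_mem hp hq θ e
  split
  · exact h.1
  · linarith [h.2]

lemma sum_graphPMF (θ : Fin n → Bool) : ∑ x : ObsGraph n, graphPMF p q θ x = 1 := by
  unfold graphPMF
  rw [← Fintype.piFinset_univ,
    ← Finset.prod_univ_sum (fun _ : Edge n => (univ : Finset Bool))
      (fun e b => if b then edgeProb p q θ e else 1 - edgeProb p q θ e)]
  have h : ∀ e : Edge n,
      (∑ b ∈ (univ : Finset Bool), if b then edgeProb p q θ e else 1 - edgeProb p q θ e) = 1 := by
    intro e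
    rw [Fintype.sum_bool]
    simp
  rw [Finset.prod_congr rfl (fun e _ => h e), Finset.prod_const_one]

/-- Discordant edges. -/
def disc {n : ℕ} (θ η : Fin n → Bool) : Finset (Edge n) :=
  Finset.univ.filter fun e => ¬ ((θ e.val.1 == θ e.val.2) = (η e.val.1 == η e.val.2))

lemma edge_aff (hp : p ∈ Set.Ioo (0:ℝ) 1) (hq : q ∈ Set.Ioo (0:ℝ) 1)
    (θ η : Fin n → Bool) (e : Edge n) :
    Real.sqrt (edgeProb p q θ e * edgeProb p q η e)
      + Real.sqrt ((1 - edgeProb p q θ e) * (1 - edgeProb p q η e))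
    = if (θ e.val.1 == θ e.val.2) = (η e.val.1 == η e.val.2) then 1 else rho p q := by
  obtain ⟨hp0, hp1⟩ := hp; obtain ⟨hq0, hq1⟩ := hq
  unfold edgeProb rho
  by_cases h1 : θ e.val.1 = θ e.val.2 <;> by_cases h2 : η e.val.1 = η e.val.2
  · rw [if_pos h1, if_pos h2, if_pos (by simp [h1, h2])]
    rw [Real.sqrt_mul_self hp0.le, Real.sqrt_mul_self (by linarith : (0:ℝ) ≤ 1 - p)]
    ring
  · rw [if_pos h1, if_neg h2, if_neg (by simp [h1, h2])]
  · rw [if_neg h1, if_pos h2, if_neg (by simp [h1, h2])]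
    rw [mul_comm q p, mul_comm (1-q) (1-p)]
  · rw [if_neg h1, if_neg h2, if_pos (by simp [h1, h2])]
    rw [Real.sqrt_mul_self hq0.le, Real.sqrt_mul_self (by linarith : (0:ℝ) ≤ 1 - q)]
    ring

lemma sum_sqrt_pmf (hp : p ∈ Set.Ioo (0:ℝ) 1) (hq : q ∈ Set.Ioo (0:ℝ) 1)
    (θ η : Fin n → Bool) :
    ∑ x : ObsGraph n, Real.sqrt (graphPMF p q θ x * graphPMF p q η x)
      = rho p q ^ (disc θ η).card := by
  have h1 : ∀ x : ObsGraph n, Real.sqrt (graphPMF p q θ x * graphPMF p q η x)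
      = ∏ e : Edge n, Real.sqrt ((if x e then edgeProb p q θ e else 1 - edgeProb p q θ e)
          * (if x e then edgeProb p q η e else 1 - edgeProb p q η e)) := by
    intro x
    unfold graphPMF
    rw [← Finset.prod_mul_distrib, sqrt_prod]
    intro e _
    have h := edgeProb_mem hp hq θ e
    have h' := edgeProb_mem hp hq η e
    split <;> nlinarith [h.1, h.2, h'.1, h'.2]
  rw [Finset.sum_congr rfl (fun x _ => h1 x)]
  rw [← Fintype.piFinset_univ,
    ← Finset.prod_univ_sum (fun _ : Edge n => (univ : Finset Bool))
      (fun e b => Real.sqrt ((if b then edgeProb p q θ e else 1 - edgeProb p q θ e)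
          * (if b then edgeProb p q η e else 1 - edgeProb p q η e)))]
  have h2 : ∀ e : Edge n,
      (∑ b ∈ (univ : Finset Bool), Real.sqrt ((if b then edgeProb p q θ e else 1 - edgeProb p q θ e)
          * (if b then edgeProb p q η e else 1 - edgeProb p q η e)))
      = if (θ e.val.1 == θ e.val.2) = (η e.val.1 == η e.val.2) then 1 else rho p q := by
    intro e
    rw [Fintype.sum_bool]
    simpa using edge_aff hp hq θ η e
  rw [Finset.prod_congr rfl (fun e _ => h2 e), Finset.prod_ite, Finset.prod_const_one, one_mul,
    Finset.prod_const]
  rfl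

lemma bool_aux (a b c d : Bool) :
    (¬ ((a == b) = (c == d))) ↔ ¬ ((a ≠ c) ↔ (b ≠ d)) := by
  cases a <;> cases b <;> cases c <;> cases d <;> decide

lemma disc_card (θ η : Fin n → Bool) :
    (disc θ η).card = hdist θ η * (n - hdist θ η) := by
  classical
  set A : Finset (Fin n) := Finset.univ.filter fun i => θ i ≠ η i with hA
  have hAcard : A.card = hdist θ η := rfl
  set X : Fin n × Fin n → Prop := fun a => ¬ ((θ a.1 ≠ η a.1) ↔ (θ a.2 ≠ η a.2)) with hX
  have hXd : DecidablePred X := fun a => by unfold X; infer_instance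
  set P : Finset (Fin n × Fin n) := Finset.univ.filter (fun a => a.1 < a.2 ∧ X a) with hP
  set P' : Finset (Fin n × Fin n) := Finset.univ.filter (fun a => a.2 < a.1 ∧ X a) with hP'
  -- disc has the same card as P
  have h1 : (disc θ η).card = P.card := by
    apply Finset.card_bij (fun e _ => e.val)
    · intro e he
      simp only [hP, Finset.mem_filter, Finset.mem_univ, true_and]
      refine ⟨e.prop, ?_⟩
      simp only [disc, Finset.mem_filter, Finset.mem_univ, true_and] at he
      exact (bool_aux _ _ _ _).mp he
    · intro e1 _ e2 _ h
      exact Subtype.ext h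
    · intro a ha
      simp only [hP, Finset.mem_filter, Finset.mem_univ, true_and] at ha
      refine ⟨⟨a, ha.1⟩, ?_, rfl⟩
      simp only [disc, Finset.mem_filter, Finset.mem_univ, true_and]
      exact (bool_aux _ _ _ _).mpr ha.2
  -- P and P' have the same card
  have h2 : P.card = P'.card := by
    apply Finset.card_bij (fun a _ => (a.2, a.1))
    · intro a ha
      simp only [hP, hP', Finset.mem_filter, Finset.mem_univ, true_and] at ha ⊢
      exact ⟨ha.1, fun h => ha.2 h.symm⟩
    · intro a1 h1 a2 h2 h
      cases a1; cases a2
      simp only [Prod.mk.injEq] at h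
      simp [h.1, h.2]
    · intro a ha
      simp only [hP, hP', Finset.mem_filter, Finset.mem_univ, true_and] at ha
      exact ⟨(a.2, a.1), by simpa only [hP, Finset.mem_filter, Finset.mem_univ, true_and]
        using ⟨ha.1, fun h => ha.2 h.symm⟩, rfl⟩
  -- union
  have h3 : Finset.univ.filter X = P ∪ P' := by
    ext a
    simp only [hP, hP', Finset.mem_filter, Finset.mem_univ, true_and, Finset.mem_union]
    constructor
    · intro hx
      have hne : a.1 ≠ a.2 := by
        intro h
        apply hx
        rw [h]
      rcases lt_or_gt_of_ne hne with h | h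
      · exact Or.inl ⟨h, hx⟩
      · exact Or.inr ⟨h, hx⟩
    · rintro (⟨_, hx⟩ | ⟨_, hx⟩) <;> exact hx
  have h4 : Disjoint P P' := by
    rw [Finset.disjoint_left]
    intro a ha ha'
    simp only [hP, hP', Finset.mem_filter] at ha ha'
    exact absurd ha'.2.1 (not_lt.mpr ha.2.1.le)
  -- filter X = A ×ˢ Aᶜ ∪ Aᶜ ×ˢ A
  have h5 : Finset.univ.filter X = A ×ˢ Aᶜ ∪ Aᶜ ×ˢ A := by
    ext a
    simp only [hX, hA, Finset.mem_filter, Finset.mem_univ, true_and, Finset.mem_union,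
      Finset.mem_product, Finset.mem_compl]
    tauto
  have h6 : Disjoint (A ×ˢ Aᶜ) (Aᶜ ×ˢ A) := by
    rw [Finset.disjoint_left]
    intro a ha ha'
    rw [Finset.mem_product] at ha ha'
    exact (Finset.mem_compl.mp ha'.1) ha.1
  have h7 : (Finset.univ.filter X).card = 2 * (A.card * (n - A.card)) := by
    rw [h5, Finset.card_union_of_disjoint h6, Finset.card_product, Finset.card_product,
      Finset.card_compl, Fintype.card_fin]
    ring
  have h8 : (Finset.univ.filter X).card = P.card + P'.card := by
    rw [h3, Finset.card_union_of_disjoint h4]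
  rw [h1, ← hAcard]
  omega

end Stmt17Aux

namespace Stmt17Aux

variable {n : ℕ} {p q : ℝ}

lemma hdist_le (θ η : Fin n → Bool) : hdist θ η ≤ n := by
  unfold hdist
  calc _ ≤ (Finset.univ : Finset (Fin n)).card := Finset.card_filter_le _ _
    _ = n := by simp

lemma hdist_self (θ : Fin n → Bool) : hdist θ θ = 0 := by
  simp [hdist]

lemma hdist_compl (θ η : Fin n → Bool) :
    hdist θ (fun i => !η i) = n - hdist θ η := by
  unfold hdist
  have h : (Finset.univ.filter fun i => θ i ≠ !η i)
      = Finset.univ.filter fun i => ¬ (θ i ≠ η i) := by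
    apply Finset.filter_congr
    intro i _
    cases h1 : θ i <;> cases h2 : η i <;> simp
  rw [h]
  have := Finset.card_filter_add_card_filter_not
    (s := (Finset.univ : Finset (Fin n))) (p := fun i => θ i ≠ η i)
  simp only [Finset.card_univ, Fintype.card_fin] at this
  omega

lemma countOnes_le (η : Fin n → Bool) : countOnes η ≤ n := by
  unfold countOnes
  calc _ ≤ (Finset.univ : Finset (Fin n)).card := Finset.card_filter_le _ _
    _ = n := by simp

lemma countOnes_compl (η : Fin n → Bool) :
    countOnes (fun i => !η i) = n - countOnes η := by
  unfold countOnes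
  have h : (Finset.univ.filter fun i => (!η i) = true)
      = Finset.univ.filter fun i => ¬ (η i = true) := by
    apply Finset.filter_congr
    intro i _
    cases h1 : η i <;> simp
  rw [h]
  have := Finset.card_filter_add_card_filter_not
    (s := (Finset.univ : Finset (Fin n))) (p := fun i => η i = true)
  simp only [Finset.card_univ, Fintype.card_fin] at this
  omega

lemma not_both_compl (hn : 2 ≤ n) (η : Fin n → Bool) (h1 : η ∈ Theta n)
    (h2 : (fun i => !η i) ∈ Theta n) : False := by
  simp only [Theta, Finset.mem_filter, Finset.mem_univ, true_and] at h1 h2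
  have hc : countOnes (fun i => !η i) = n - countOnes η := countOnes_compl η
  have hle : countOnes η ≤ n := countOnes_le η
  have heq : 2 * countOnes η = n := by omega
  have heq2 : 2 * countOnes (fun i => !η i) = n := by omega
  have e1 := h1.2 ⟨0, by omega⟩ heq rfl
  have e2 := h2.2 ⟨0, by omega⟩ heq2 rfl
  simp only [e1] at e2
  exact absurd e2 (by simp)

lemma sum_pow_hdist (θ : Fin n → Bool) (t : ℝ) :
    ∑ σ : Fin n → Bool, t ^ hdist θ σ = (1 + t) ^ n := by
  have h1 : ∀ σ : Fin n → Bool, t ^ hdist θ σ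
      = ∏ i : Fin n, (if θ i = σ i then 1 else t) := by
    intro σ
    rw [Finset.prod_ite, Finset.prod_const_one, one_mul, Finset.prod_const]
    rfl
  rw [Finset.sum_congr rfl (fun σ _ => h1 σ)]
  rw [← Fintype.piFinset_univ,
    ← Finset.prod_univ_sum (fun _ : Fin n => (univ : Finset Bool))
      (fun i b => if θ i = b then (1:ℝ) else t)]
  have h2 : ∀ i : Fin n, (∑ b ∈ (univ : Finset Bool), if θ i = b then (1:ℝ) else t) = 1 + t := by
    intro i
    rw [Fintype.sum_bool]
    cases h : θ i <;> simp [h, add_comm]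
  rw [Finset.prod_congr rfl (fun i _ => h2 i), Finset.prod_const, Finset.card_univ,
    Fintype.card_fin]

set_option maxHeartbeats 1000000 in
lemma sum_kdist_le (hn : 2 ≤ n) (θ : Fin n → Bool) (hθ : θ ∈ Theta n) {t : ℝ} (ht : 0 ≤ t) :
    ∑ η ∈ (Theta n).erase θ, t ^ kdist θ η ≤ (1 + t) ^ n - 1 := by
  set φ : (Fin n → Bool) → (Fin n → Bool) :=
    fun η => if hdist θ η ≤ n - hdist θ η then η else (fun i => !η i) with hφ
  have hdφ : ∀ η, hdist θ (φ η) = kdist θ η := by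
    intro η
    unfold kdist
    by_cases h : hdist θ η ≤ n - hdist θ η
    · rw [hφ]
      simp only [if_pos h]
      rw [min_eq_left h]
    · rw [hφ]
      simp only [if_neg h]
      rw [hdist_compl, min_eq_right (le_of_not_ge h)]
  have hmem : ∀ η ∈ (Theta n).erase θ, η ∈ Theta n :=
    fun η hη => Finset.mem_of_mem_erase hη
  have hinj : ∀ η1 ∈ (Theta n).erase θ, ∀ η2 ∈ (Theta n).erase θ, φ η1 = φ η2 → η1 = η2 := by
    intro η1 h1 η2 h2 h
    rw [hφ] at h
    simp only at h
    by_cases c1 : hdist θ η1 ≤ n - hdist θ η1 <;>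
      by_cases c2 : hdist θ η2 ≤ n - hdist θ η2
    · rwa [if_pos c1, if_pos c2] at h
    · rw [if_pos c1, if_neg c2] at h
      exact absurd (hmem _ h1) (fun hh => not_both_compl hn η2 (hmem _ h2) (h ▸ hh))
    · rw [if_neg c1, if_pos c2] at h
      exact absurd (hmem _ h2) (fun hh => not_both_compl hn η1 (hmem _ h1) (h ▸ hh))
    · rw [if_neg c1, if_neg c2] at h
      funext i
      have := congrFun h i
      exact Bool.not_inj this
  have himg : ((Theta n).erase θ).image φ ⊆ Finset.univ.erase θ := by
    intro σ hσ
    rw [Finset.mem_image] at hσ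
    obtain ⟨η, hη, rfl⟩ := hσ
    refine Finset.mem_erase.mpr ⟨?_, Finset.mem_univ _⟩
    rw [hφ]
    simp only
    split
    · exact (Finset.mem_erase.mp hη).1
    · intro hc
      apply not_both_compl hn η (hmem _ hη)
      rw [hc]
      exact hθ
  calc ∑ η ∈ (Theta n).erase θ, t ^ kdist θ η
      = ∑ η ∈ (Theta n).erase θ, t ^ hdist θ (φ η) := by
        exact Finset.sum_congr rfl (fun η _ => by rw [hdφ])
    _ = ∑ σ ∈ ((Theta n).erase θ).image φ, t ^ hdist θ σ := (Finset.sum_image (f := fun σ => t ^ hdist θ σ) hinj).symm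
    _ ≤ ∑ σ ∈ Finset.univ.erase θ, t ^ hdist θ σ :=
        Finset.sum_le_sum_of_subset_of_nonneg himg (fun σ _ _ => pow_nonneg ht _)
    _ = (∑ σ : Fin n → Bool, t ^ hdist θ σ) - t ^ hdist θ θ :=
        Finset.sum_erase_eq_sub (Finset.mem_univ θ)
    _ = (1 + t) ^ n - 1 := by rw [sum_pow_hdist, hdist_self, pow_zero]

lemma pow_disc_le {r : ℝ} (hr0 : 0 < r) (hr1 : r ≤ 1) {h : ℕ} (hhn : h ≤ n) :
    r ^ (h * (n - h)) ≤ (r ^ ((n:ℝ)/2)) ^ (min h (n - h)) := by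
  rw [← Real.rpow_natCast r (h * (n - h)), ← Real.rpow_natCast (r ^ ((n:ℝ)/2)) (min h (n - h)),
    ← Real.rpow_mul hr0.le]
  apply Real.rpow_le_rpow_of_exponent_ge hr0 hr1
  have hc : ((n - h : ℕ) : ℝ) = (n : ℝ) - (h : ℝ) := by
    rw [Nat.cast_sub hhn]
  push_cast [hc]
  have hle : (h : ℝ) ≤ (n : ℝ) := by exact_mod_cast hhn
  have h0 : (0:ℝ) ≤ (h : ℝ) := Nat.cast_nonneg h
  rcases le_total (h : ℝ) ((n:ℝ) - h) with hc2 | hc2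
  · rw [min_eq_left hc2]
    nlinarith
  · rw [min_eq_right hc2]
    nlinarith

lemma div_le_sqrt_half {a b Z : ℝ} (ha : 0 < a) (hb : 0 < b) (hZ : a + b ≤ Z) :
    a * b / Z ≤ Real.sqrt (a * b) / 2 := by
  have hs : 0 < Real.sqrt (a * b) := Real.sqrt_pos.2 (by positivity)
  have h2 : 2 * Real.sqrt (a * b) ≤ Z := by
    have := sqrt_le_half_add ha.le hb.le
    linarith
  have hZ0 : (0:ℝ) < Z := by linarith
  rw [div_le_div_iff₀ hZ0 two_pos]
  have hsq : Real.sqrt (a * b) ^ 2 = a * b := Real.sq_sqrt (by positivity)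
  nlinarith [mul_le_mul_of_nonneg_left h2 hs.le]

lemma exp_sub_one_le {x : ℝ} (hx : 0 ≤ x) : Real.exp x - 1 ≤ x * Real.exp x := by
  have h := Real.add_one_le_exp (-x)
  have hmul : Real.exp (-x) * Real.exp x = 1 := by
    rw [← Real.exp_add]; simp
  nlinarith [Real.exp_pos x, mul_le_mul_of_nonneg_right h (Real.exp_pos x).le]

lemma rho_pos (hp : p ∈ Set.Ioo (0:ℝ) 1) (hq : q ∈ Set.Ioo (0:ℝ) 1) : 0 < rho p q := by
  unfold rho
  have : 0 < Real.sqrt (p * q) := Real.sqrt_pos.2 (mul_pos hp.1 hq.1)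
  have := Real.sqrt_nonneg ((1 - p) * (1 - q))
  linarith

lemma rho_le_one (hp : p ∈ Set.Ioo (0:ℝ) 1) (hq : q ∈ Set.Ioo (0:ℝ) 1) : rho p q ≤ 1 := by
  unfold rho
  have h1 := sqrt_le_half_add hp.1.le hq.1.le
  have h2 := sqrt_le_half_add (by linarith [hp.2] : (0:ℝ) ≤ 1 - p)
    (by linarith [hq.2] : (0:ℝ) ≤ 1 - q)
  linarith

end Stmt17Aux

open Stmt17Aux in
/-- every credible set of level `1 − γ` is a confidence set of level
`1 − (n/(2(1−γ))) ρ(p,q)^{n/2} exp(n ρ(p,q)^{n/2})`. -/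
theorem stmt17 (n : ℕ) (hn : 2 ≤ n) (p q : ℝ) (hp : p ∈ Set.Ioo (0:ℝ) 1)
    (hq : q ∈ Set.Ioo (0:ℝ) 1) (θ : Fin n → Bool) (hθ : θ ∈ Theta n)
    (γ : ℝ) (hγ : γ ∈ Set.Ioo (0:ℝ) 1)
    (D : ObsGraph n → Finset (Fin n → Bool)) (hDsub : ∀ x, D x ⊆ Theta n)
    (hD : ∀ x, 1 - γ ≤ postMass p q (unifPrior n) (D x) x) :
    1 - ((n : ℝ) / (2 * (1 - γ))) * rho p q ^ ((n : ℝ) / 2)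
        * Real.exp ((n : ℝ) * rho p q ^ ((n : ℝ) / 2))
      ≤ ∑ x ∈ Finset.univ.filter (fun x : ObsGraph n => θ ∈ D x),
          graphPMF p q θ x := by
  have hγpos : (0:ℝ) < 1 - γ := by linarith [hγ.2]
  have hr0 : 0 < rho p q := rho_pos hp hq
  have hr1 : rho p q ≤ 1 := rho_le_one hp hq
  set t : ℝ := rho p q ^ ((n:ℝ)/2) with htdef
  have ht0 : 0 < t := Real.rpow_pos_of_pos hr0 _
  have hgpos : ∀ (η : Fin n → Bool) (x : ObsGraph n), 0 < graphPMF p q η x :=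
    fun η x => graphPMF_pos hp hq η x
  set Z : ObsGraph n → ℝ := fun x => ∑ η ∈ Theta n, graphPMF p q η x with hZdef
  have hZpos : ∀ x, 0 < Z x := by
    intro x
    exact Finset.sum_pos (fun η _ => hgpos η x) ⟨θ, hθ⟩
  have hpost : ∀ (A : Finset (Fin n → Bool)) (x : ObsGraph n),
      postMass p q (unifPrior n) A x = (∑ η ∈ A, graphPMF p q η x) / Z x := by
    intro A x
    unfold postMass unifPrior
    simp only [hZdef]
    rw [← Finset.mul_sum, ← Finset.mul_sum]
    exact mul_div_mul_left _ _ (by positivity)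
  set E := (Theta n).erase θ with hE
  have e4 : ∀ η ∈ E, (∑ x : ObsGraph n, graphPMF p q θ x * graphPMF p q η x / Z x)
      ≤ 1/2 * t ^ kdist θ η := by
    intro η hη
    have hηθ : η ≠ θ := (Finset.mem_erase.mp hη).1
    have hηT : η ∈ Theta n := Finset.mem_of_mem_erase hη
    have hpair : ∀ x : ObsGraph n, graphPMF p q θ x + graphPMF p q η x ≤ Z x := by
      intro x
      have h1 : graphPMF p q η x ≤ ∑ σ ∈ E, graphPMF p q σ x :=
        Finset.single_le_sum (f := fun σ => graphPMF p q σ x)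
          (fun σ _ => (hgpos σ x).le) hη
      have h2 : graphPMF p q θ x + ∑ σ ∈ E, graphPMF p q σ x = Z x := by
        rw [hE, hZdef]
        exact Finset.add_sum_erase (Theta n) (fun σ => graphPMF p q σ x) hθ
      linarith
    calc ∑ x : ObsGraph n, graphPMF p q θ x * graphPMF p q η x / Z x
        ≤ ∑ x : ObsGraph n, Real.sqrt (graphPMF p q θ x * graphPMF p q η x) / 2 :=
          Finset.sum_le_sum (fun x _ => div_le_sqrt_half (hgpos θ x) (hgpos η x) (hpair x))
      _ = (rho p q ^ (disc θ η).card) / 2 := by rw [← Finset.sum_div, sum_sqrt_pmf hp hq]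
      _ ≤ (t ^ kdist θ η) / 2 := by
          apply div_le_div_of_nonneg_right ?_ (by norm_num : (0:ℝ) ≤ 2)
          rw [disc_card θ η]
          exact pow_disc_le hr0 hr1 (hdist_le θ η)
      _ = 1/2 * t ^ kdist θ η := by ring
  have step1 : ∀ x ∈ Finset.univ.filter (fun x : ObsGraph n => ¬ θ ∈ D x),
      graphPMF p q θ x ≤ (∑ η ∈ E, graphPMF p q θ x * graphPMF p q η x / Z x) / (1 - γ) := by
    intro x hx
    rw [Finset.mem_filter] at hx
    have hsub : D x ⊆ E := by
      intro η hη
      exact Finset.mem_erase.mpr ⟨fun h => hx.2 (h ▸ hη), hDsub x hη⟩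
    have hnum : (∑ η ∈ D x, graphPMF p q η x) ≤ ∑ η ∈ E, graphPMF p q η x :=
      Finset.sum_le_sum_of_subset_of_nonneg hsub (fun σ _ _ => (hgpos σ x).le)
    have h1 : 1 - γ ≤ (∑ η ∈ E, graphPMF p q η x) / Z x := by
      refine le_trans (le_trans (hD x) (le_of_eq (hpost (D x) x))) ?_
      exact div_le_div_of_nonneg_right hnum (hZpos x).le
    have hsum : (∑ η ∈ E, graphPMF p q θ x * graphPMF p q η x / Z x)
        = graphPMF p q θ x * ((∑ η ∈ E, graphPMF p q η x) / Z x) := by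
      rw [← Finset.sum_div, ← Finset.mul_sum, mul_div_assoc]
    rw [hsum, le_div_iff₀ hγpos]
    exact mul_le_mul_of_nonneg_left h1 (hgpos θ x).le
  have key : (∑ x ∈ Finset.univ.filter (fun x : ObsGraph n => ¬ θ ∈ D x), graphPMF p q θ x)
      ≤ ((n:ℝ) / (2 * (1 - γ))) * t * Real.exp ((n:ℝ) * t) := by
    calc ∑ x ∈ Finset.univ.filter (fun x : ObsGraph n => ¬ θ ∈ D x), graphPMF p q θ x
        ≤ ∑ x ∈ Finset.univ.filter (fun x : ObsGraph n => ¬ θ ∈ D x),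
            (∑ η ∈ E, graphPMF p q θ x * graphPMF p q η x / Z x) / (1 - γ) :=
          Finset.sum_le_sum step1
      _ ≤ ∑ x : ObsGraph n, (∑ η ∈ E, graphPMF p q θ x * graphPMF p q η x / Z x) / (1 - γ) :=
          Finset.sum_le_sum_of_subset_of_nonneg (Finset.filter_subset _ _)
            (fun x _ _ => div_nonneg (Finset.sum_nonneg (fun η _ => div_nonneg
              (mul_nonneg (hgpos θ x).le (hgpos η x).le) (hZpos x).le)) hγpos.le)
      _ = (∑ η ∈ E, ∑ x : ObsGraph n, graphPMF p q θ x * graphPMF p q η x / Z x) / (1 - γ) := by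
          rw [← Finset.sum_div, Finset.sum_comm]
      _ ≤ (∑ η ∈ E, 1/2 * t ^ kdist θ η) / (1 - γ) :=
          div_le_div_of_nonneg_right (Finset.sum_le_sum e4) hγpos.le
      _ = (1/2) * (∑ η ∈ E, t ^ kdist θ η) / (1 - γ) := by rw [Finset.mul_sum]
      _ ≤ (1/2) * ((1 + t)^n - 1) / (1 - γ) := by
          have hs := sum_kdist_le hn θ hθ ht0.le
          apply div_le_div_of_nonneg_right ?_ hγpos.le
          nlinarith
      _ ≤ (1/2) * ((n:ℝ) * t * Real.exp ((n:ℝ)*t)) / (1 - γ) := by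
          have h1 : (1+t)^n ≤ Real.exp ((n:ℝ)*t) := by
            have h2 : (1+t) ≤ Real.exp t := by linarith [Real.add_one_le_exp t]
            calc (1+t)^n ≤ (Real.exp t)^n := pow_le_pow_left₀ (by linarith) h2 n
              _ = Real.exp ((n:ℝ)*t) := (Real.exp_nat_mul t n).symm
          have h3 : Real.exp ((n:ℝ)*t) - 1 ≤ ((n:ℝ)*t) * Real.exp ((n:ℝ)*t) :=
            exp_sub_one_le (by positivity)
          apply div_le_div_of_nonneg_right ?_ hγpos.le
          nlinarith
      _ = ((n:ℝ) / (2*(1-γ))) * t * Real.exp ((n:ℝ)*t) := by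
          field_simp
  have hsplit := Finset.sum_filter_add_sum_filter_not Finset.univ
    (fun x : ObsGraph n => θ ∈ D x) (graphPMF p q θ)
  rw [sum_graphPMF θ] at hsplit
  linarith [key, hsplit]
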